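/- Let c_1 ≤ c_2 be capacities, let there be exactly m = c_1 + c_2 goods with nonnegative per-item values w_1, w_2 : Fin m → ℝ for agents 1 and 2, and let (S_1, S_2) be a partition of the goods with |S_1| = c_1 and |S_2| = c_2 maximizing Σ_{j∈S_1} w_1 j + Σ_{j∈S_2} w_2 j over all such partitions. Then (sum of the c_1 largest entries of w_2) − (sum of the c_1 largest entries of w_1) ≤ Σ_{j∈S_2} w_2 j − (sum of the c_1 largest values w_1 j over j ∈ S_2). -/

import Mathlib

/-- The sum of the `min b m` largest entries of `x : Fin m → ℝ`, expressed as the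
maximum over all subsets of cardinality `min b m` of the sum of entries. -/
noncomputable def topSum {m : ℕ} (b : ℕ) (x : Fin m → ℝ) : ℝ :=
  sSup {y : ℝ | ∃ T : Finset (Fin m), T.card = min b m ∧ y = ∑ j ∈ T, x j}

/-- The sum of the `min b |Y|` largest entries of `x` within the subset `Y`,
expressed as the maximum over all subsets `T ⊆ Y` of cardinality `min b |Y|`
of the sum of entries. -/
noncomputable def topSumIn {m : ℕ} (b : ℕ) (x : Fin m → ℝ)
    (Y : Finset (Fin m)) : ℝ :=
  sSup {y : ℝ | ∃ T : Finset (Fin m), T ⊆ Y ∧ T.card = min b Y.card ∧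
    y = ∑ j ∈ T, x j}

/-- For capacities `c₁ ≤ c₂`, exactly `c₁ + c₂` goods, and an optimal partition
`(S₁, S₂)` with `|S₁| = c₁`, `|S₂| = c₂`, it holds that
`top_{c₁}(w₂) − top_{c₁}(w₁) ≤ ∑_{j∈S₂} w₂ j − top_{c₁}(w₁ | S₂)`. -/
theorem top_diff_le_opt_bundle_diff' (c₁ c₂ : ℕ) (hc : c₁ ≤ c₂)
    (w₁ w₂ : Fin (c₁ + c₂) → ℝ) (hw₁ : ∀ j, 0 ≤ w₁ j) (hw₂ : ∀ j, 0 ≤ w₂ j)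
    (S₁ S₂ : Finset (Fin (c₁ + c₂)))
    (hdisj : Disjoint S₁ S₂) (hcover : S₁ ∪ S₂ = Finset.univ)
    (hcard₁ : S₁.card = c₁) (hcard₂ : S₂.card = c₂)
    (hopt : ∀ T₁ T₂ : Finset (Fin (c₁ + c₂)), Disjoint T₁ T₂ →
      T₁ ∪ T₂ = Finset.univ → T₁.card = c₁ → T₂.card = c₂ →
      (∑ j ∈ T₁, w₁ j) + (∑ j ∈ T₂, w₂ j) ≤
        (∑ j ∈ S₁, w₁ j) + (∑ j ∈ S₂, w₂ j)) :
    topSum c₁ w₂ - topSum c₁ w₁ ≤ (∑ j ∈ S₂, w₂ j) - topSumIn c₁ w₁ S₂ := by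
  classical
  have hc₁m : c₁ ≤ c₁ + c₂ := Nat.le_add_right _ _
  have hmin1 : min c₁ (c₁ + c₂) = c₁ := min_eq_left hc₁m
  have hminS : min c₁ S₂.card = c₁ := by rw [hcard₂]; exact min_eq_left hc
  -- the three defining sets
  set SetIn : Set ℝ := {y : ℝ | ∃ T : Finset (Fin (c₁ + c₂)), T ⊆ S₂ ∧ T.card = min c₁ S₂.card ∧
    y = ∑ j ∈ T, w₁ j} with hSetIn
  set Set1 : Set ℝ := {y : ℝ | ∃ T : Finset (Fin (c₁ + c₂)), T.card = min c₁ (c₁ + c₂) ∧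
    y = ∑ j ∈ T, w₁ j} with hSet1
  set Set2 : Set ℝ := {y : ℝ | ∃ T : Finset (Fin (c₁ + c₂)), T.card = min c₁ (c₁ + c₂) ∧
    y = ∑ j ∈ T, w₂ j} with hSet2
  have hInFin : SetIn.Finite := by
    apply Set.Finite.subset (Set.finite_range (fun T : Finset (Fin (c₁ + c₂)) => ∑ j ∈ T, w₁ j))
    rintro y ⟨T, -, -, rfl⟩; exact ⟨T, rfl⟩
  have h1Fin : Set1.Finite := by
    apply Set.Finite.subset (Set.finite_range (fun T : Finset (Fin (c₁ + c₂)) => ∑ j ∈ T, w₁ j))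
    rintro y ⟨T, -, rfl⟩; exact ⟨T, rfl⟩
  have hInNe : SetIn.Nonempty := by
    obtain ⟨T, hTs, hTc⟩ := Finset.exists_subset_card_eq (s := S₂) (n := c₁) (by rw [hcard₂]; exact hc)
    exact ⟨_, T, hTs, by rw [hminS, hTc], rfl⟩
  have h2Ne : Set2.Nonempty := by
    obtain ⟨T, -, hTc⟩ := Finset.exists_subset_card_eq (s := (Finset.univ : Finset (Fin (c₁ + c₂)))) (n := c₁)
      (by simpa using hc₁m)
    exact ⟨_, T, by rw [hmin1, hTc], rfl⟩
  -- A achieves topSumIn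
  obtain ⟨A, hAS₂, hAcard, hAeq⟩ := hInNe.csSup_mem hInFin
  rw [hminS] at hAcard
  have hTopIn : topSumIn c₁ w₁ S₂ = ∑ j ∈ A, w₁ j := hAeq
  -- main bound : every element of Set2 is at most the RHS bound
  have key : ∀ y ∈ Set2, y ≤ (∑ j ∈ S₂, w₂ j) + topSum c₁ w₁ - ∑ j ∈ A, w₁ j := by
    rintro y ⟨B, hBcard, rfl⟩
    rw [hmin1] at hBcard
    set B₁ := B ∩ S₁ with hB₁
    set B₂ := B ∩ S₂ with hB₂
    have hB₁S₁ : B₁ ⊆ S₁ := Finset.inter_subset_right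
    have hB₂S₂ : B₂ ⊆ S₂ := Finset.inter_subset_right
    have hB12 : B₁ ∪ B₂ = B := by
      rw [hB₁, hB₂, ← Finset.inter_union_distrib_left, hcover, Finset.inter_univ]
    have hdisjB : Disjoint B₁ B₂ := hdisj.mono hB₁S₁ hB₂S₂
    have hcardB : B₁.card + B₂.card = c₁ := by
      rw [← Finset.card_union_of_disjoint hdisjB, hB12, hBcard]
    -- pick C ⊆ A \ B₂ with |C| = |B₁|
    obtain ⟨C, hCsub, hCcard⟩ := Finset.exists_subset_card_eq (s := A \ B₂) (n := B₁.card) (by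
      have h1 : A.card - B₂.card ≤ (A \ B₂).card := Finset.le_card_sdiff _ _
      have h2 : B₂.card ≤ B.card := Finset.card_le_card Finset.inter_subset_left
      omega)
    have hCA : C ⊆ A := hCsub.trans (Finset.sdiff_subset)
    have hCS₂ : C ⊆ S₂ := hCA.trans hAS₂
    have hCB₂ : Disjoint C B₂ := Finset.sdiff_disjoint.mono_left hCsub
    -- the swapped partition
    set T₁ := (S₁ \ B₁) ∪ C with hT₁
    set T₂ := B₁ ∪ (S₂ \ C) with hT₂
    have hd1 : Disjoint (S₁ \ B₁) C := (hdisj.mono_left Finset.sdiff_subset).mono_right hCS₂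
    have hd2 : Disjoint B₁ (S₂ \ C) := (hdisj.mono_left hB₁S₁).mono_right Finset.sdiff_subset
    have hdT : Disjoint T₁ T₂ := by
      rw [hT₁, hT₂, Finset.disjoint_union_left, Finset.disjoint_union_right,
        Finset.disjoint_union_right]
      refine ⟨⟨Finset.sdiff_disjoint, (hdisj.mono Finset.sdiff_subset Finset.sdiff_subset)⟩,
        ⟨(hdisj.symm.mono hCS₂ hB₁S₁), Finset.disjoint_sdiff⟩⟩
    have huT : T₁ ∪ T₂ = Finset.univ := by
      ext j
      have hj : j ∈ S₁ ∨ j ∈ S₂ := by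
        rw [← Finset.mem_union, hcover]; exact Finset.mem_univ j
      simp only [hT₁, hT₂, Finset.mem_union, Finset.mem_sdiff, Finset.mem_univ, iff_true]
      tauto
    have hcT₁ : T₁.card = c₁ := by
      rw [hT₁, Finset.card_union_of_disjoint hd1, Finset.card_sdiff_of_subset hB₁S₁, hcard₁, hCcard]
      have : B₁.card ≤ c₁ := by omega
      omega
    have hcT₂ : T₂.card = c₂ := by
      rw [hT₂, Finset.card_union_of_disjoint hd2, Finset.card_sdiff_of_subset hCS₂, hcard₂]
      have hCle : C.card ≤ c₂ := by rw [hCcard]; omega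
      omega
    have hswap := hopt T₁ T₂ hdT huT hcT₁ hcT₂
    rw [hT₁, hT₂, Finset.sum_union hd1, Finset.sum_union hd2] at hswap
    have hs1 : ∑ j ∈ S₁ \ B₁, w₁ j + ∑ j ∈ B₁, w₁ j = ∑ j ∈ S₁, w₁ j :=
      Finset.sum_sdiff hB₁S₁
    have hs2 : ∑ j ∈ S₂ \ C, w₂ j + ∑ j ∈ C, w₂ j = ∑ j ∈ S₂, w₂ j :=
      Finset.sum_sdiff hCS₂
    -- exchange inequality
    have hexch : ∑ j ∈ C, w₁ j + ∑ j ∈ B₁, w₂ j ≤ ∑ j ∈ B₁, w₁ j + ∑ j ∈ C, w₂ j := by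
      linarith
    -- B₂ ∪ C ⊆ S₂, sum of w₂ bounded
    have hBCdisj : Disjoint B₂ C := hCB₂.symm
    have hBC : ∑ j ∈ B₂, w₂ j + ∑ j ∈ C, w₂ j ≤ ∑ j ∈ S₂, w₂ j := by
      rw [← Finset.sum_union hBCdisj]
      apply Finset.sum_le_sum_of_subset_of_nonneg
      · exact Finset.union_subset hB₂S₂ hCS₂
      · intro j _ _; exact hw₂ j
    -- split A over C
    have hAsplit : ∑ j ∈ A \ C, w₁ j + ∑ j ∈ C, w₁ j = ∑ j ∈ A, w₁ j :=
      Finset.sum_sdiff hCA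
    -- B₁ ∪ (A \ C) has card c₁ and bounds topSum c₁ w₁ from below
    have hdB₁A : Disjoint B₁ (A \ C) :=
      (hdisj.mono_left hB₁S₁).mono_right (Finset.sdiff_subset.trans hAS₂)
    have hcardBA : (B₁ ∪ (A \ C)).card = min c₁ (c₁ + c₂) := by
      rw [hmin1, Finset.card_union_of_disjoint hdB₁A, Finset.card_sdiff_of_subset hCA, hAcard, hCcard]
      have : B₁.card ≤ c₁ := by omega
      omega
    have hmem : ∑ j ∈ B₁ ∪ (A \ C), w₁ j ∈ Set1 := ⟨B₁ ∪ (A \ C), hcardBA, rfl⟩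
    have hle1 : ∑ j ∈ B₁ ∪ (A \ C), w₁ j ≤ topSum c₁ w₁ :=
      le_csSup h1Fin.bddAbove hmem
    rw [Finset.sum_union hdB₁A] at hle1
    have hBsplit : ∑ j ∈ B, w₂ j = ∑ j ∈ B₁, w₂ j + ∑ j ∈ B₂, w₂ j := by
      rw [← hB12, Finset.sum_union hdisjB]
    linarith
  have htop2 : topSum c₁ w₂ ≤ (∑ j ∈ S₂, w₂ j) + topSum c₁ w₁ - ∑ j ∈ A, w₁ j :=
    csSup_le h2Ne key
  rw [hTopIn]
  linarith
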